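/- Let a > 0, r = (x, y, z) ∈ ℝ³, and a⃗ = (0, 0, a). The function V(r) = -(2/a) · arccoth((|r + a⃗| + |r - a⃗|)/(2a)) is harmonic on ℝ³ minus the segment joining (0,0,-a) and (0,0,a), and satisfies r·∇V = |r + a⃗|⁻¹ + |r - a⃗|⁻¹. -/

import Mathlib

open scoped BigOperators

/-- `arccoth t = ½ log((t+1)/(t-1))` for `t > 1`. -/
noncomputable def arccoth (t : ℝ) : ℝ := (1/2) * Real.log ((t + 1)/(t - 1))

section EHaux

open Real
local notation "E3" => EuclideanSpace ℝ (Fin 3)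

private lemma normAddHasFDerivAt (c x : E3) (h : x + c ≠ 0) :
    HasFDerivAt (fun y : E3 => ‖y + c‖) (‖x + c‖⁻¹ • (innerSL ℝ (x + c))) x := by
  have h1 : HasFDerivAt (fun y : E3 => y + c) (ContinuousLinearMap.id ℝ E3) x :=
    (hasFDerivAt_id x).add_const c
  have h2 := h1.norm_sq
  have hn : (0:ℝ) < ‖x + c‖ := norm_pos_iff.mpr h
  have h3 : HasDerivAt Real.sqrt (1 / (2 * Real.sqrt (‖x + c‖^2))) (‖x+c‖^2) :=
    Real.hasDerivAt_sqrt (by positivity)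
  have h4 := h3.comp_hasFDerivAt x h2
  have he : (Real.sqrt ∘ fun y : E3 => ‖y + c‖^2) = fun y : E3 => ‖y + c‖ := by
    funext y; simp [Function.comp, Real.sqrt_sq (norm_nonneg _)]
  rw [he] at h4
  refine h4.congr_fderiv ?_
  rw [Real.sqrt_sq (norm_nonneg _)]
  ext w
  simp [two_smul]
  ring

private lemma normSubHasFDerivAt (c x : E3) (h : x - c ≠ 0) :
    HasFDerivAt (fun y : E3 => ‖y - c‖) (‖x - c‖⁻¹ • (innerSL ℝ (x - c))) x := by
  have h1 : HasFDerivAt (fun y : E3 => y - c) (ContinuousLinearMap.id ℝ E3) x :=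
    (hasFDerivAt_id x).sub_const c
  have h2 := h1.norm_sq
  have hn : (0:ℝ) < ‖x - c‖ := norm_pos_iff.mpr h
  have h3 : HasDerivAt Real.sqrt (1 / (2 * Real.sqrt (‖x - c‖^2))) (‖x-c‖^2) :=
    Real.hasDerivAt_sqrt (by positivity)
  have h4 := h3.comp_hasFDerivAt x h2
  have he : (Real.sqrt ∘ fun y : E3 => ‖y - c‖^2) = fun y : E3 => ‖y - c‖ := by
    funext y; simp [Function.comp, Real.sqrt_sq (norm_nonneg _)]
  rw [he] at h4
  refine h4.congr_fderiv ?_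
  rw [Real.sqrt_sq (norm_nonneg _)]
  ext w
  simp [two_smul]
  ring

private lemma seg_lt (a : ℝ) (ha : 0 < a) (r : E3)
    (h : ¬(r 0 = 0 ∧ r 1 = 0 ∧ |r 2| ≤ a)) :
    2 * a < ‖r + EuclideanSpace.single 2 a‖ + ‖r - EuclideanSpace.single 2 a‖ := by
  set av : E3 := EuclideanSpace.single 2 a with hav
  have hnav : ‖av‖ = a := by
    rw [hav, EuclideanSpace.norm_single, Real.norm_eq_abs, abs_of_pos ha]
  have hsum : (r + av) + (av - r) = av + av := by abel
  have hle : 2 * a ≤ ‖r + av‖ + ‖r - av‖ := by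
    have h1 : ‖(r + av) + (av - r)‖ ≤ ‖r + av‖ + ‖av - r‖ := norm_add_le _ _
    rw [hsum, norm_sub_rev (av) r] at h1
    calc 2 * a = ‖av + av‖ := by
          rw [← two_smul ℝ av, norm_smul]; simp [hnav]
      _ ≤ _ := h1
  rcases lt_or_eq_of_le hle with hlt | heq
  · exact hlt
  · exfalso
    have hray : SameRay ℝ (r + av) (av - r) := by
      rw [sameRay_iff_norm_add, hsum]
      rw [norm_sub_rev av r]
      rw [← two_smul ℝ av, norm_smul]
      simp [hnav]
      linarith [heq]
    obtain ⟨t1, t2, ht1, ht2, hsum12, he1, -⟩ := hray.exists_eq_smul_add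
    rw [hsum] at he1
    have hr : r = (2 * t1 - 1) • av := by
      have h2 : r = t1 • (av + av) - av := by
        rw [← he1]; abel
      rw [h2]; module
    have hcoord : ∀ i, r i = (2 * t1 - 1) * av i := by
      intro i; rw [hr]; rfl
    apply h
    refine ⟨?_, ?_, ?_⟩
    · rw [hcoord 0, hav]; simp [EuclideanSpace.single_apply]
    · rw [hcoord 1, hav]; simp [EuclideanSpace.single_apply]
    · rw [hcoord 2, hav]
      have : |2 * t1 - 1| ≤ 1 := by
        rw [abs_le]; constructor <;> nlinarith
      simp only [EuclideanSpace.single_apply, if_true, abs_mul, abs_of_pos ha]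
      nlinarith [abs_nonneg (2*t1-1)]

private lemma Vhasderiv (a : ℝ) (ha : 0 < a) (av : E3) (hnav : ‖av‖ = a)
    (V : E3 → ℝ) (hV : ∀ r, V r = -(2/a) * arccoth ((‖r + av‖ + ‖r - av‖)/(2*a)))
    (y : E3) (hy : 2*a < ‖y + av‖ + ‖y - av‖) :
    HasFDerivAt V
      (((1/a) * ((‖y+av‖+‖y-av‖-2*a)⁻¹ - (‖y+av‖+‖y-av‖+2*a)⁻¹)) •
        (‖y+av‖⁻¹ • innerSL ℝ (y+av) + ‖y-av‖⁻¹ • innerSL ℝ (y-av))) y := by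
  have hyp : y + av ≠ 0 := by
    intro h0
    have hy1 : ‖y + av‖ = 0 := by rw [h0]; simp
    have hyy : y = -av := by rwa [add_eq_zero_iff_eq_neg] at h0
    have hy2 : ‖y - av‖ = 2 * a := by
      have : y - av = -(av + av) := by rw [hyy]; abel
      rw [this, norm_neg, ← two_smul ℝ av, norm_smul]
      simp [hnav]
    linarith
  have hyq : y - av ≠ 0 := by
    intro h0
    have hy1 : ‖y - av‖ = 0 := by rw [h0]; simp
    have hyy : y = av := by rwa [sub_eq_zero] at h0
    have hy2 : ‖y + av‖ = 2 * a := by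
      rw [hyy, ← two_smul ℝ av, norm_smul]
      simp [hnav]
    linarith
  have hu' := normAddHasFDerivAt av y hyp
  have hv' := normSubHasFDerivAt av y hyq
  have hs' := hu'.add hv'
  have hupos : (0:ℝ) < ‖y + av‖ := norm_pos_iff.mpr hyp
  have hvpos : (0:ℝ) < ‖y - av‖ := norm_pos_iff.mpr hyq
  have ht1 : ‖y+av‖+‖y-av‖ - 2*a ≠ 0 := by linarith
  have ht2 : ‖y+av‖+‖y-av‖ + 2*a ≠ 0 := by linarith
  have hlog1 := (hs'.sub_const (2*a)).log ht1
  have hlog2 := (hs'.add_const (2*a)).log ht2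
  have hVt := (hlog1.sub hlog2).const_mul (1/a)
  have hO : IsOpen {z : E3 | 2*a < ‖z + av‖ + ‖z - av‖} := by
    apply isOpen_lt continuous_const
    exact ((continuous_id.add continuous_const).norm.add
      ((continuous_id.sub continuous_const).norm))
  have hev : V =ᶠ[nhds y] (fun z => (1/a) * (Real.log (‖z+av‖+‖z-av‖ - 2*a)
      - Real.log (‖z+av‖+‖z-av‖ + 2*a))) := by
    filter_upwards [hO.mem_nhds hy] with z hz
    have hz' : (2:ℝ)*a < ‖z + av‖ + ‖z - av‖ := hz
    rw [hV z, arccoth]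
    have h2a : (0:ℝ) < 2*a := by linarith
    have harg : ((‖z + av‖ + ‖z - av‖)/(2*a) + 1)/((‖z + av‖ + ‖z - av‖)/(2*a) - 1)
        = (‖z+av‖+‖z-av‖ + 2*a)/(‖z+av‖+‖z-av‖ - 2*a) := by
      have hane : a ≠ 0 := ne_of_gt ha
      have hd1 : (‖z + av‖ + ‖z - av‖)/(2*a) - 1 ≠ 0 := by
        have : 1 < (‖z + av‖ + ‖z - av‖)/(2*a) := (one_lt_div h2a).mpr hz'
        linarith
      have hd2 : ‖z+av‖+‖z-av‖ - 2*a ≠ 0 := by linarith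
      rw [div_eq_div_iff hd1 hd2]
      field_simp
    rw [harg, Real.log_div (by linarith) (by linarith)]
    field_simp
    ring
  have hfinal := hVt.congr_of_eventuallyEq hev
  refine hfinal.congr_fderiv ?_
  ext w
  simp [ContinuousLinearMap.smul_apply, ContinuousLinearMap.add_apply, smul_sub]
  ring

private lemma lap_alg (a u v A B C : ℝ) (ha : a ≠ 0) (hu : u ≠ 0) (hv : v ≠ 0)
    (h1 : u + v - 2*a ≠ 0) (h2 : u + v + 2*a ≠ 0)
    (hA : A = u^2) (hB : B = v^2) (hC : C = (u^2+v^2)/2 - 2*a^2) :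
    (1/a) * ((u+v-2*a)⁻¹ - (u+v+2*a)⁻¹)
        * (3*u⁻¹ + 3*v⁻¹ - (u^2)⁻¹*u⁻¹*A - (v^2)⁻¹*v⁻¹*B)
    + (1/a) * (((u+v+2*a)^2)⁻¹ - ((u+v-2*a)^2)⁻¹)
        * ((u⁻¹*u⁻¹)*A + 2*(u⁻¹*v⁻¹)*C + (v⁻¹*v⁻¹)*B) = 0 := by
  subst hA hB hC
  have h1' : u + v - a*2 ≠ 0 := by contrapose! h1; linarith
  have h2' : u + v + a*2 ≠ 0 := by contrapose! h2; linarith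
  field_simp
  ring

private lemma rad_alg (a u v Ax Bx : ℝ) (ha : a ≠ 0) (hu : u ≠ 0) (hv : v ≠ 0)
    (h1 : u + v - 2*a ≠ 0) (h2 : u + v + 2*a ≠ 0)
    (hAx : Ax = (u^2+v^2)/2 - a^2 + (u^2-v^2)/4)
    (hBx : Bx = (u^2+v^2)/2 - a^2 - (u^2-v^2)/4) :
    (1/a) * ((u+v-2*a)⁻¹ - (u+v+2*a)⁻¹) * (u⁻¹*Ax + v⁻¹*Bx) = u⁻¹ + v⁻¹ := by
  subst hAx hBx
  have h1' : u + v - a*2 ≠ 0 := by contrapose! h1; linarith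
  have h2' : u + v + a*2 ≠ 0 := by contrapose! h2; linarith
  field_simp
  ring

end EHaux

private lemma proj_single (i : Fin 3) :
    (EuclideanSpace.proj (𝕜 := ℝ) i) (EuclideanSpace.single i (1:ℝ)) = 1 := by
  rw [show ((EuclideanSpace.proj (𝕜 := ℝ) i) (EuclideanSpace.single i (1:ℝ)))
      = (EuclideanSpace.single (𝕜 := ℝ) i (1:ℝ)) i from rfl]
  simp [EuclideanSpace.single_apply]

set_option maxHeartbeats 2000000 in
/-- The function `V(r) = -(2/a) arccoth((|r + a⃗| + |r - a⃗|)/(2a))`, with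
`a⃗ = (0,0,a)`, is harmonic away from the segment joining `(0,0,-a)` and
`(0,0,a)`, and satisfies `r·∇V = |r + a⃗|⁻¹ + |r - a⃗|⁻¹`. -/
theorem eguchi_hanson_potential (a : ℝ) (ha : 0 < a)
    (av : EuclideanSpace ℝ (Fin 3)) (hav : av = EuclideanSpace.single 2 a)
    (V : EuclideanSpace ℝ (Fin 3) → ℝ)
    (hV : ∀ r, V r = -(2/a) * arccoth ((‖r + av‖ + ‖r - av‖)/(2*a)))
    (seg : Set (EuclideanSpace ℝ (Fin 3)))
    (hseg : seg = {r | r 0 = 0 ∧ r 1 = 0 ∧ |r 2| ≤ a}) :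
    ∀ r ∉ seg,
      (∑ i, fderiv ℝ (fun y => fderiv ℝ V y (EuclideanSpace.single i 1)) r
          (EuclideanSpace.single i 1) = 0) ∧
      (∑ i, r i * fderiv ℝ V r (EuclideanSpace.single i 1)
        = ‖r + av‖⁻¹ + ‖r - av‖⁻¹) := by
  intro r hr
  rw [hseg] at hr
  simp only [Set.mem_setOf_eq] at hr
  have hane : a ≠ 0 := ne_of_gt ha
  have hnav : ‖av‖ = a := by
    rw [hav, EuclideanSpace.norm_single, Real.norm_eq_abs, abs_of_pos ha]
  have hgt : 2*a < ‖r + av‖ + ‖r - av‖ := by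
    rw [hav]; exact seg_lt a ha r hr
  -- basic nonvanishing facts at r
  have hyp : r + av ≠ 0 := by
    intro h0
    have hy1 : ‖r + av‖ = 0 := by rw [h0]; simp
    have hyy : r = -av := by rwa [add_eq_zero_iff_eq_neg] at h0
    have hy2 : ‖r - av‖ = 2 * a := by
      have : r - av = -(av + av) := by rw [hyy]; abel
      rw [this, norm_neg, ← two_smul ℝ av, norm_smul]
      simp [hnav]
    linarith
  have hyq : r - av ≠ 0 := by
    intro h0
    have hy1 : ‖r - av‖ = 0 := by rw [h0]; simp
    have hyy : r = av := by rwa [sub_eq_zero] at h0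
    have hy2 : ‖r + av‖ = 2 * a := by
      rw [hyy, ← two_smul ℝ av, norm_smul]
      simp [hnav]
    linarith
  have hupos : (0:ℝ) < ‖r + av‖ := norm_pos_iff.mpr hyp
  have hvpos : (0:ℝ) < ‖r - av‖ := norm_pos_iff.mpr hyq
  have hune : ‖r + av‖ ≠ 0 := ne_of_gt hupos
  have hvne : ‖r - av‖ ≠ 0 := ne_of_gt hvpos
  have h1 : ‖r+av‖+‖r-av‖-2*a ≠ 0 := by linarith
  have h2 : ‖r+av‖+‖r-av‖+2*a ≠ 0 := by linarith
  -- coordinates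
  have hc0p : (r + av) 0 = r 0 := by simp [hav, EuclideanSpace.single_apply]
  have hc1p : (r + av) 1 = r 1 := by simp [hav, EuclideanSpace.single_apply]
  have hc2p : (r + av) 2 = r 2 + a := by simp [hav, EuclideanSpace.single_apply]
  have hc0q : (r - av) 0 = r 0 := by simp [hav, EuclideanSpace.single_apply]
  have hc1q : (r - av) 1 = r 1 := by simp [hav, EuclideanSpace.single_apply]
  have hc2q : (r - av) 2 = r 2 - a := by simp [hav, EuclideanSpace.single_apply]
  -- norm identities
  have hA : (r 0)^2 + (r 1)^2 + (r 2 + a)^2 = ‖r + av‖^2 := by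
    rw [EuclideanSpace.norm_eq, Real.sq_sqrt (by positivity), Fin.sum_univ_three,
      hc0p, hc1p, hc2p]
    simp [Real.norm_eq_abs, sq_abs]
  have hB : (r 0)^2 + (r 1)^2 + (r 2 - a)^2 = ‖r - av‖^2 := by
    rw [EuclideanSpace.norm_eq, Real.sq_sqrt (by positivity), Fin.sum_univ_three,
      hc0q, hc1q, hc2q]
    simp [Real.norm_eq_abs, sq_abs]
  -- open set where everything is smooth
  have hO : IsOpen {z : EuclideanSpace ℝ (Fin 3) | 2*a < ‖z + av‖ + ‖z - av‖} := by
    apply isOpen_lt continuous_const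
    exact ((continuous_id.add continuous_const).norm.add
      ((continuous_id.sub continuous_const).norm))
  have hrO : r ∈ {z : EuclideanSpace ℝ (Fin 3) | 2*a < ‖z + av‖ + ‖z - av‖} := hgt
  -- value of the first derivative at any point of O
  have val : ∀ z, 2*a < ‖z + av‖ + ‖z - av‖ → ∀ i : Fin 3,
      fderiv ℝ V z (EuclideanSpace.single i 1) =
      (1/a) * ((‖z+av‖+‖z-av‖-2*a)⁻¹ - (‖z+av‖+‖z-av‖+2*a)⁻¹) *
        (‖z+av‖⁻¹ * (z+av) i + ‖z-av‖⁻¹ * (z-av) i) := by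
    intro z hz i
    rw [(Vhasderiv a ha av hnav V hV z hz).fderiv]
    simp [ContinuousLinearMap.smul_apply, ContinuousLinearMap.add_apply,
      EuclideanSpace.inner_single_right]
    ring
  constructor
  · -- Laplacian
    have key2 : ∀ i : Fin 3,
        fderiv ℝ (fun y => fderiv ℝ V y (EuclideanSpace.single i 1)) r
          (EuclideanSpace.single i 1) =
        ((1/a) * ((‖r+av‖+‖r-av‖-2*a)⁻¹ - (‖r+av‖+‖r-av‖+2*a)⁻¹)) *
          (‖r+av‖⁻¹ + (r+av) i * (-(‖r+av‖^2)⁻¹ * (‖r+av‖⁻¹ * (r+av) i))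
           + (‖r-av‖⁻¹ + (r-av) i * (-(‖r-av‖^2)⁻¹ * (‖r-av‖⁻¹ * (r-av) i))))
        + (‖r+av‖⁻¹ * (r+av) i + ‖r-av‖⁻¹ * (r-av) i) *
          ((1/a) * ((-((‖r+av‖+‖r-av‖-2*a)^2)⁻¹)
              * (‖r+av‖⁻¹ * (r+av) i + ‖r-av‖⁻¹ * (r-av) i)
            - (-((‖r+av‖+‖r-av‖+2*a)^2)⁻¹)
              * (‖r+av‖⁻¹ * (r+av) i + ‖r-av‖⁻¹ * (r-av) i))) := by
      intro i
      have hev2 : (fun y => fderiv ℝ V y (EuclideanSpace.single i 1)) =ᶠ[nhds r]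
          (fun y => (1/a) * ((‖y+av‖+‖y-av‖-2*a)⁻¹ - (‖y+av‖+‖y-av‖+2*a)⁻¹) *
            (‖y+av‖⁻¹ * (y+av) i + ‖y-av‖⁻¹ * (y-av) i)) := by
        filter_upwards [hO.mem_nhds hrO] with z hz
        exact val z hz i
      rw [hev2.fderiv_eq]
      have hu' := normAddHasFDerivAt av r hyp
      have hv' := normSubHasFDerivAt av r hyq
      have hs' := hu'.add hv'
      have hinv1 : HasFDerivAt (fun y : EuclideanSpace ℝ (Fin 3) => (‖y+av‖+‖y-av‖-2*a)⁻¹)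
          ((-((‖r+av‖+‖r-av‖-2*a) ^ 2)⁻¹) • (‖r + av‖⁻¹ • (innerSL ℝ (r + av)) + ‖r - av‖⁻¹ • (innerSL ℝ (r - av)))) r :=
        (hasDerivAt_inv h1).comp_hasFDerivAt r (hs'.sub_const (2*a))
      have hinv2 : HasFDerivAt (fun y : EuclideanSpace ℝ (Fin 3) => (‖y+av‖+‖y-av‖+2*a)⁻¹)
          ((-((‖r+av‖+‖r-av‖+2*a) ^ 2)⁻¹) • (‖r + av‖⁻¹ • (innerSL ℝ (r + av)) + ‖r - av‖⁻¹ • (innerSL ℝ (r - av)))) r :=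
        (hasDerivAt_inv h2).comp_hasFDerivAt r (hs'.add_const (2*a))
      have hinvu : HasFDerivAt (fun y : EuclideanSpace ℝ (Fin 3) => ‖y+av‖⁻¹)
          ((-(‖r+av‖ ^ 2)⁻¹) • (‖r + av‖⁻¹ • (innerSL ℝ (r + av)))) r :=
        (hasDerivAt_inv hune).comp_hasFDerivAt r hu'
      have hinvv : HasFDerivAt (fun y : EuclideanSpace ℝ (Fin 3) => ‖y-av‖⁻¹)
          ((-(‖r-av‖ ^ 2)⁻¹) • (‖r - av‖⁻¹ • (innerSL ℝ (r - av)))) r :=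
        (hasDerivAt_inv hvne).comp_hasFDerivAt r hv'
      have hcp : HasFDerivAt (fun y : EuclideanSpace ℝ (Fin 3) => (y + av) i)
          (EuclideanSpace.proj (𝕜 := ℝ) i) r :=
        ((EuclideanSpace.proj (𝕜 := ℝ) i).hasFDerivAt (x := r)).add_const (av i)
      have hcq : HasFDerivAt (fun y : EuclideanSpace ℝ (Fin 3) => (y - av) i)
          (EuclideanSpace.proj (𝕜 := ℝ) i) r :=
        ((EuclideanSpace.proj (𝕜 := ℝ) i).hasFDerivAt (x := r)).sub_const (av i)
      have hP := (((hinv1.sub hinv2).const_mul (1/a)).mul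
        ((hinvu.mul hcp).add (hinvv.mul hcq)))
      rw [HasFDerivAt.fderiv (f := fun y : EuclideanSpace ℝ (Fin 3) =>
        (1/a) * ((‖y+av‖+‖y-av‖-2*a)⁻¹ - (‖y+av‖+‖y-av‖+2*a)⁻¹) *
          (‖y+av‖⁻¹ * (y+av) i + ‖y-av‖⁻¹ * (y-av) i)) hP]
      simp only [ContinuousLinearMap.add_apply, ContinuousLinearMap.smul_apply,
        ContinuousLinearMap.sub_apply, innerSL_apply_apply, EuclideanSpace.inner_single_right,
        conj_trivial, smul_eq_mul, proj_single, Pi.sub_apply, Pi.add_apply, Pi.mul_apply]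
      ring
    rw [Fin.sum_univ_three, key2 0, key2 1, key2 2,
      hc0p, hc1p, hc2p, hc0q, hc1q, hc2q]
    have hC : r 0 * r 0 + r 1 * r 1 + (r 2 + a)*(r 2 - a)
        = (‖r+av‖^2 + ‖r-av‖^2)/2 - 2*a^2 := by
      linear_combination (1/2) * hA + (1/2) * hB
    linear_combination lap_alg a ‖r+av‖ ‖r-av‖
      ((r 0)^2 + (r 1)^2 + (r 2 + a)^2) ((r 0)^2 + (r 1)^2 + (r 2 - a)^2)
      (r 0 * r 0 + r 1 * r 1 + (r 2 + a)*(r 2 - a))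
      hane hune hvne h1 h2 hA hB hC
  · -- radial derivative
    rw [Fin.sum_univ_three, val r hgt 0, val r hgt 1, val r hgt 2,
      hc0p, hc1p, hc2p, hc0q, hc1q, hc2q]
    have hAx : r 0 * r 0 + r 1 * r 1 + r 2 * (r 2 + a)
        = (‖r+av‖^2 + ‖r-av‖^2)/2 - a^2 + (‖r+av‖^2 - ‖r-av‖^2)/4 := by
      linear_combination (3/4) * hA + (1/4) * hB
    have hBx : r 0 * r 0 + r 1 * r 1 + r 2 * (r 2 - a)
        = (‖r+av‖^2 + ‖r-av‖^2)/2 - a^2 - (‖r+av‖^2 - ‖r-av‖^2)/4 := by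
      linear_combination (1/4) * hA + (3/4) * hB
    linear_combination rad_alg a ‖r+av‖ ‖r-av‖
      (r 0 * r 0 + r 1 * r 1 + r 2 * (r 2 + a))
      (r 0 * r 0 + r 1 * r 1 + r 2 * (r 2 - a))
      hane hune hvne h1 h2 hAx hBx
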